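/- arXiv:1709.03589 — 4 statements merged into one kernel-verified Lean document; each statement's English description precedes it below -/
import Mathlib

section
/- Let V be an n-dimensional real vector space, let (F,G,H) be a transverse triple of complete flags in V, and let i,j,k ≥ 1 be integers with i+j+k = n. Then the eruption endomorphism A^{i,j,k}_{F,G,H} fixes the flag F, i.e. A^{i,j,k}_{F,G,H}(F^(m)) = F^(m) for every 0 ≤ m ≤ n. -/
/-- `F` is a complete flag in an `n`-dimensional real vector space:
`F 0 ⊆ F 1 ⊆ ⋯ ⊆ F n` with `dim (F l) = l` for `0 ≤ l ≤ n`. -/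
def IsFlag (n : ℕ) {V : Type*} [AddCommGroup V] [Module ℝ V]
    (F : ℕ → Submodule ℝ V) : Prop :=
  (∀ l, l < n → F l ≤ F (l + 1)) ∧ ∀ l, l ≤ n → Module.finrank ℝ (F l) = l

/-- A triple of flags is transverse if `F a + G b + H c = V` whenever `a + b + c = n`. -/
def TransverseTriple (n : ℕ) {V : Type*} [AddCommGroup V] [Module ℝ V]
    (F G H : ℕ → Submodule ℝ V) : Prop :=
  ∀ a b c : ℕ, a + b + c = n → F a ⊔ G b ⊔ H c = ⊤

/-- A pair of flags is transverse if `F a + G (n - a) = V` for all `0 ≤ a ≤ n`. -/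
def TransversePair (n : ℕ) {V : Type*} [AddCommGroup V] [Module ℝ V]
    (F G : ℕ → Submodule ℝ V) : Prop :=
  ∀ a, a ≤ n → F a ⊔ G (n - a) = ⊤

/-- `A` is the `(i,j,k)`-eruption endomorphism of the triple `(F,G,H)`: it acts as the
scalar `(n - i)/n` on `F i` and as the scalar `-i/n` on `G j + H k`. -/
def IsEruption (n i j k : ℕ) {V : Type*} [AddCommGroup V] [Module ℝ V]
    (F G H : ℕ → Submodule ℝ V) (A : Module.End ℝ V) : Prop :=
  (∀ v ∈ F i, A v = (((n : ℝ) - (i : ℝ)) / (n : ℝ)) • v) ∧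
  (∀ v ∈ G j ⊔ H k, A v = (-(i : ℝ) / (n : ℝ)) • v)

/-- `A` is the `(i, n-i)`-shearing endomorphism of the pair `(F,G)`: it acts as the
scalar `(n - i)/n` on `F i` and as the scalar `-i/n` on `G (n - i)`. -/
def IsShearing (n i : ℕ) {V : Type*} [AddCommGroup V] [Module ℝ V]
    (F G : ℕ → Submodule ℝ V) (A : Module.End ℝ V) : Prop :=
  (∀ v ∈ F i, A v = (((n : ℝ) - (i : ℝ)) / (n : ℝ)) • v) ∧
  (∀ v ∈ G (n - i), A v = (-(i : ℝ) / (n : ℝ)) • v)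

private lemma map_eq_of_smul' {V : Type*} [AddCommGroup V] [Module ℝ V] (A : Module.End ℝ V)
    (p : Submodule ℝ V) (c : ℝ) (hc : c ≠ 0) (h : ∀ v ∈ p, A v = c • v) :
    Submodule.map A p = p := by
  apply le_antisymm
  · rintro x ⟨v, hv, rfl⟩
    rw [h v hv]; exact p.smul_mem c hv
  · intro v hv
    exact ⟨c⁻¹ • v, p.smul_mem _ hv, by
      rw [map_smul, h v hv, smul_smul, inv_mul_cancel₀ hc, one_smul]⟩

private lemma flag_mono' {n : ℕ} {V : Type*} [AddCommGroup V] [Module ℝ V]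
    {F : ℕ → Submodule ℝ V} (hF : IsFlag n F) :
    ∀ b a, a ≤ b → b ≤ n → F a ≤ F b := by
  intro b
  induction b with
  | zero => intro a ha _; interval_cases a; exact le_rfl
  | succ b ih =>
    intro a ha hb
    rcases Nat.lt_or_ge a (b + 1) with h | h
    · exact (ih a (by omega) (by omega)).trans (hF.1 b (by omega))
    · have : a = b + 1 := by omega
      subst this; exact le_rfl

theorem statement0 (n : ℕ) (V : Type*) [AddCommGroup V] [Module ℝ V] [FiniteDimensional ℝ V]
    (hV : Module.finrank ℝ V = n)
    (F G H : ℕ → Submodule ℝ V) (hF : IsFlag n F) (hG : IsFlag n G) (hH : IsFlag n H)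
    (hFGH : TransverseTriple n F G H)
    (i j k : ℕ) (hi : 1 ≤ i) (hj : 1 ≤ j) (hk : 1 ≤ k) (hijk : i + j + k = n)
    (A : Module.End ℝ V) (hA : IsEruption n i j k F G H A) :
    ∀ m, m ≤ n → Submodule.map A (F m) = F m := by
  -- setup
  intro m hm
  have hn : (1:ℕ) ≤ n := by omega
  have hiltn : i < n := by omega
  have hnR : (n : ℝ) ≠ 0 := by positivity
  have hc1 : ((n : ℝ) - (i : ℝ)) / (n : ℝ) ≠ 0 := by
    have : (i : ℝ) < (n : ℝ) := by exact_mod_cast hiltn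
    have h1 : (0:ℝ) < (n : ℝ) - (i : ℝ) := by linarith
    positivity
  have hc2 : (-(i : ℝ)) / (n : ℝ) ≠ 0 := by
    have hiR : (0:ℝ) < (i : ℝ) := by exact_mod_cast hi
    intro h
    rw [div_eq_zero_iff] at h
    rcases h with h | h
    · linarith
    · exact hnR h
  set W := G j ⊔ H k with hW
  have hFiW_top : F i ⊔ W = ⊤ := by
    rw [hW, ← sup_assoc]; exact hFGH i j k hijk
  have hdimW_le : Module.finrank ℝ W ≤ j + k := by
    have hGj := hG.2 j (by omega)
    have hHk := hH.2 k (by omega)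
    have h := Submodule.finrank_sup_add_finrank_inf_eq (G j) (H k)
    rw [hGj, hHk, ← hW] at h
    omega
  have hdimFi : Module.finrank ℝ (F i) = i := hF.2 i (by omega)
  have key : Module.finrank ℝ (F i) + Module.finrank ℝ W
      = Module.finrank ℝ (F i ⊔ W : Submodule ℝ V) + Module.finrank ℝ (F i ⊓ W : Submodule ℝ V) :=
    (Submodule.finrank_sup_add_finrank_inf_eq (F i) W).symm
  have hdimtop : Module.finrank ℝ (F i ⊔ W : Submodule ℝ V) = n := by
    rw [hFiW_top, finrank_top, hV]
  have hinf_bot : F i ⊓ W = ⊥ := by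
    have h1 : Module.finrank ℝ (F i ⊓ W : Submodule ℝ V) = 0 := by omega
    exact Submodule.finrank_eq_zero.mp h1
  have hdimW : Module.finrank ℝ W = n - i := by omega
  rcases le_or_gt m i with hmi | him
  · -- m ≤ i : F m ≤ F i, scalar action
    have hle : F m ≤ F i := flag_mono' hF i m hmi (by omega)
    exact map_eq_of_smul' A (F m) _ hc1 (fun v hv => hA.1 v (hle hv))
  · -- i < m
    have hle : F i ≤ F m := flag_mono' hF m i (by omega) hm
    have hFmW_top : F m ⊔ W = ⊤ := by
      apply eq_top_iff.mpr
      rw [← hFiW_top]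
      exact sup_le_sup_right hle W
    have hdimFm : Module.finrank ℝ (F m) = m := hF.2 m hm
    have key2 : Module.finrank ℝ (F m) + Module.finrank ℝ W
        = Module.finrank ℝ (F m ⊔ W : Submodule ℝ V) + Module.finrank ℝ (F m ⊓ W : Submodule ℝ V) :=
      (Submodule.finrank_sup_add_finrank_inf_eq (F m) W).symm
    have hdimtop2 : Module.finrank ℝ (F m ⊔ W : Submodule ℝ V) = n := by
      rw [hFmW_top, finrank_top, hV]
    have hdimFmW : Module.finrank ℝ (F m ⊓ W : Submodule ℝ V) = m - i := by omega
    -- F m = F i ⊔ (F m ⊓ W)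
    have hinf_bot2 : F i ⊓ (F m ⊓ W) = ⊥ := by
      apply le_bot_iff.mp
      rw [← hinf_bot]
      exact le_inf inf_le_left (inf_le_right.trans inf_le_right)
    have key3 : Module.finrank ℝ (F i) + Module.finrank ℝ (F m ⊓ W : Submodule ℝ V)
        = Module.finrank ℝ (F i ⊔ (F m ⊓ W) : Submodule ℝ V)
          + Module.finrank ℝ (F i ⊓ (F m ⊓ W) : Submodule ℝ V) :=
      (Submodule.finrank_sup_add_finrank_inf_eq (F i) (F m ⊓ W)).symm
    have hbot0 : Module.finrank ℝ (F i ⊓ (F m ⊓ W) : Submodule ℝ V) = 0 := by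
      rw [hinf_bot2]; exact finrank_bot ℝ V
    have hdimsup : Module.finrank ℝ (F i ⊔ (F m ⊓ W) : Submodule ℝ V) = m := by omega
    have hdecomp : F i ⊔ (F m ⊓ W) = F m := by
      apply Submodule.eq_of_le_of_finrank_le (sup_le hle inf_le_left)
      rw [hdimFm, hdimsup]
    have hmapFi : Submodule.map A (F i) = F i :=
      map_eq_of_smul' A (F i) _ hc1 hA.1
    have hmapFmW : Submodule.map A (F m ⊓ W) = F m ⊓ W :=
      map_eq_of_smul' A (F m ⊓ W) _ hc2 (fun v hv => hA.2 v hv.2)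
    calc Submodule.map A (F m) = Submodule.map A (F i ⊔ (F m ⊓ W)) := by rw [hdecomp]
      _ = Submodule.map A (F i) ⊔ Submodule.map A (F m ⊓ W) := Submodule.map_sup _ _ _
      _ = F i ⊔ (F m ⊓ W) := by rw [hmapFi, hmapFmW]
      _ = F m := hdecomp
end

section
/- Let V be an n-dimensional real vector space, let (F,G,H) be a transverse triple of complete flags in V, and let i,j,k,i',j',k' ∈ {0,…,n−1} be integers with i+j+k = n = i'+j'+k'. Then tr(A^{i,j,k}_{F,G,H} ∘ A^{j',k',i'}_{G,H,F}) = max(0, min(i−i', j'−j)) − (i·j')/n. In particular this trace does not depend on F, G, H. -/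
open Module LinearMap

lemma IsFlag.mono' {n : ℕ} {V : Type*} [AddCommGroup V] [Module ℝ V]
    {F : ℕ → Submodule ℝ V} (hF : IsFlag n F) {a b : ℕ} (hab : a ≤ b) (hb : b ≤ n) :
    F a ≤ F b := by
  induction b with
  | zero => simpa [Nat.le_zero.mp hab] using le_refl _
  | succ m ih =>
    rcases Nat.lt_or_ge a (m+1) with h | h
    · exact le_trans (ih (Nat.lt_succ_iff.mp h) (le_trans (Nat.le_succ m) hb))
        (hF.1 m (Nat.lt_of_lt_of_le (Nat.lt_succ_self m) hb))
    · have : a = m + 1 := le_antisymm hab h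
      simp [this]

lemma key_trace {V : Type*} [AddCommGroup V] [Module ℝ V] [FiniteDimensional ℝ V]
    (U U' : Submodule ℝ V) (hle : U' ≤ U) (φ : Module.End ℝ V)
    (hrange : ∀ v, φ v ∈ U)
    (hU : ∀ v ∈ U, φ v - v ∈ U')
    (hU' : ∀ v ∈ U', φ v = 0) :
    LinearMap.trace ℝ V φ = (finrank ℝ U : ℝ) - (finrank ℝ U' : ℝ) := by
  have hrestr : ∀ x ∈ U, φ x ∈ U := fun x _ => hrange x
  rw [← LinearMap.trace_restrict_eq_of_forall_mem U φ hrange hrestr]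
  set ψ : Module.End ℝ U := φ.restrict hrestr with hψ
  set N : Module.End ℝ U := ψ - LinearMap.id with hN
  have hψN : ψ = N + LinearMap.id := by rw [hN]; abel
  have htrψ : LinearMap.trace ℝ U ψ = LinearMap.trace ℝ U N + (finrank ℝ U : ℝ) := by
    rw [hψN, map_add, LinearMap.trace_id]
  set U'' : Submodule ℝ U := U'.comap U.subtype with hU''
  have hNrange : ∀ x : U, N x ∈ U'' := by
    intro x
    simp only [hN, LinearMap.sub_apply, LinearMap.id_apply, hU'']
    simpa [LinearMap.restrict_apply, hψ] using hU (x : V) x.2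
  have hNrestr : ∀ x ∈ U'', N x ∈ U'' := fun x _ => hNrange x
  have htrN : LinearMap.trace ℝ U N = -(finrank ℝ U' : ℝ) := by
    rw [← LinearMap.trace_restrict_eq_of_forall_mem U'' N hNrange hNrestr]
    have hid : N.restrict hNrestr = (-1 : ℝ) • LinearMap.id := by
      ext x
      have hx' : (x : U).1 ∈ U' := x.2
      have hφx : φ (x : U) = 0 := hU' _ hx'
      simp [LinearMap.restrict_apply, hN, hψ, hφx]
    have hfr : finrank ℝ U'' = finrank ℝ U' :=
      (Submodule.comapSubtypeEquivOfLe hle).finrank_eq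
    rw [hid, map_smul, LinearMap.trace_id, hfr]
    simp
  rw [htrψ, htrN]; ring

theorem statement7 (n : ℕ) (V : Type*) [AddCommGroup V] [Module ℝ V] [FiniteDimensional ℝ V]
    (hV : Module.finrank ℝ V = n)
    (F G H : ℕ → Submodule ℝ V) (hF : IsFlag n F) (hG : IsFlag n G) (hH : IsFlag n H)
    (hFGH : TransverseTriple n F G H)
    (i j k i' j' k' : ℕ) (hi : i < n) (hj : j < n) (hk : k < n)
    (hi' : i' < n) (hj' : j' < n) (hk' : k' < n)
    (hijk : i + j + k = n) (hijk' : i' + j' + k' = n)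
    (A B : Module.End ℝ V)
    (hA : IsEruption n i j k F G H A) (hB : IsEruption n j' k' i' G H F B) :
    LinearMap.trace ℝ V (A ∘ₗ B) =
      max 0 (min ((i : ℝ) - (i' : ℝ)) ((j' : ℝ) - (j : ℝ))) - (i : ℝ) * (j' : ℝ) / (n : ℝ) := by
  have hn : (n : ℝ) ≠ 0 := Nat.cast_ne_zero.mpr (by omega)
  set c : ℝ := (i : ℝ) / n with hc
  set c' : ℝ := (j' : ℝ) / n with hc'
  set P : Module.End ℝ V := A + c • 1 with hPdef
  set Q : Module.End ℝ V := B + c' • 1 with hQdef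
  have hPapp : ∀ v, P v = A v + c • v := fun v => by simp [hPdef]
  have hQapp : ∀ v, Q v = B v + c' • v := fun v => by simp [hQdef]
  -- P is the identity on F i and zero on G j ⊔ H k
  have hP1 : ∀ v ∈ F i, P v = v := by
    intro v hv
    rw [hPapp, hA.1 v hv, ← add_smul]
    have : ((n : ℝ) - i) / n + c = 1 := by rw [hc]; field_simp; ring
    rw [this, one_smul]
  have hP0 : ∀ v ∈ G j ⊔ H k, P v = 0 := by
    intro v hv
    rw [hPapp, hA.2 v hv, ← add_smul]
    have : -(i : ℝ) / n + c = 0 := by rw [hc]; field_simp; ring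
    rw [this, zero_smul]
  have hQ1 : ∀ v ∈ G j', Q v = v := by
    intro v hv
    rw [hQapp, hB.1 v hv, ← add_smul]
    have : ((n : ℝ) - j') / n + c' = 1 := by rw [hc']; field_simp; ring
    rw [this, one_smul]
  have hQ0 : ∀ v ∈ H k' ⊔ F i', Q v = 0 := by
    intro v hv
    rw [hQapp, hB.2 v hv, ← add_smul]
    have : -(j' : ℝ) / n + c' = 0 := by rw [hc']; field_simp; ring
    rw [this, zero_smul]
  -- codisjointness
  have hcd1 : Codisjoint (F i) (G j ⊔ H k) := by
    rw [codisjoint_iff, ← sup_assoc]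
    exact hFGH i j k hijk
  have hcd2 : Codisjoint (G j') (H k' ⊔ F i') := by
    rw [codisjoint_iff, sup_comm (H k') (F i'), ← sup_assoc, sup_comm (G j') (F i')]
    exact hFGH i' j' k' hijk'
  -- P and Q are the corresponding projections
  have hPmem : ∀ v : V, P v ∈ F i ∧ v - P v ∈ G j ⊔ H k := by
    intro v
    obtain ⟨f, w, hf, hw, hfw⟩ := Submodule.codisjoint_iff_exists_add_eq.mp hcd1 v
    have hPv : P v = f := by
      rw [← hfw, map_add, hP1 f hf, hP0 w hw, add_zero]
    refine ⟨hPv ▸ hf, ?_⟩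
    rw [hPv, ← hfw]
    simpa using hw
  have hQmem : ∀ v : V, Q v ∈ G j' ∧ v - Q v ∈ H k' ⊔ F i' := by
    intro v
    obtain ⟨f, w, hf, hw, hfw⟩ := Submodule.codisjoint_iff_exists_add_eq.mp hcd2 v
    have hQv : Q v = f := by
      rw [← hfw, map_add, hQ1 f hf, hQ0 w hw, add_zero]
    refine ⟨hQv ▸ hf, ?_⟩
    rw [hQv, ← hfw]
    simpa using hw
  -- traces of P and Q
  have hfrF : finrank ℝ (F i) = i := hF.2 i hi.le
  have hfrG : finrank ℝ (G j') = j' := hG.2 j' hj'.le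
  have htrP : LinearMap.trace ℝ V P = (i : ℝ) := by
    have := key_trace (F i) ⊥ bot_le P (fun v => (hPmem v).1)
      (fun v hv => by simp [hP1 v hv]) (fun v hv => by
        simp only [Submodule.mem_bot] at hv; simp [hv])
    rw [this, hfrF]; simp
  have htrQ : LinearMap.trace ℝ V Q = (j' : ℝ) := by
    have := key_trace (G j') ⊥ bot_le Q (fun v => (hQmem v).1)
      (fun v hv => by simp [hQ1 v hv]) (fun v hv => by
        simp only [Submodule.mem_bot] at hv; simp [hv])
    rw [this, hfrG]; simp
  -- expansion of the trace
  have hA' : A = P - c • 1 := by rw [hPdef]; abel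
  have hB' : B = Q - c' • 1 := by rw [hQdef]; abel
  have hABtr : LinearMap.trace ℝ V (A ∘ₗ B) =
      LinearMap.trace ℝ V (P * Q) - (i : ℝ) * j' / n := by
    have hexp : A ∘ₗ B = P * Q - c' • P - c • Q + (c * c') • (1 : Module.End ℝ V) := by
      ext v
      simp only [hA', hB', LinearMap.comp_apply, LinearMap.sub_apply, LinearMap.add_apply,
        LinearMap.smul_apply, Module.End.one_apply, Module.End.mul_apply, map_sub, map_smul,
        smul_sub, smul_smul]
      module
    rw [hexp, map_add, map_sub, map_sub, map_smul, map_smul, map_smul, htrP, htrQ,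
      LinearMap.trace_one, hV, hc, hc', smul_eq_mul, smul_eq_mul, smul_eq_mul]
    field_simp
    ring
  rw [hABtr]
  -- case analysis on the trace of P * Q
  rcases le_or_gt j' j with hjj | hjj
  · -- Q maps into G j' ⊆ G j ⊆ ker P, so P * Q = 0
    have hPQ : P * Q = 0 := by
      ext v
      have : Q v ∈ G j ⊔ H k :=
        Submodule.mem_sup_left (hG.mono' hjj hj.le (hQmem v).1)
      simp [Module.End.mul_apply, hP0 _ this]
    have hmin : min ((i : ℝ) - i') ((j' : ℝ) - j) ≤ 0 := by
      refine le_trans (min_le_right _ _) ?_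
      have : (j' : ℝ) ≤ j := Nat.cast_le.mpr hjj
      linarith
    rw [hPQ, map_zero, max_eq_left hmin]
  · rcases le_or_gt i i' with hii | hii
    · -- P maps into F i ⊆ F i' ⊆ ker Q, so Q * P = 0
      have hQP : Q * P = 0 := by
        ext v
        have : P v ∈ H k' ⊔ F i' :=
          Submodule.mem_sup_right (hF.mono' hii hi'.le (hPmem v).1)
        simp [Module.End.mul_apply, hQ0 _ this]
      have hmin : min ((i : ℝ) - i') ((j' : ℝ) - j) ≤ 0 := by
        refine le_trans (min_le_left _ _) ?_
        have : (i : ℝ) ≤ i' := Nat.cast_le.mpr hii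
        linarith
      rw [LinearMap.trace_mul_comm, hQP, map_zero, max_eq_left hmin]
    · rcases le_or_gt k k' with hkk | hkk
      · -- main case 1 : trace (P*Q) = j' - j
        have hGle : G j ≤ G j' := hG.mono' hjj.le hj'.le
        have hT : LinearMap.trace ℝ V (Q * P) = (j' : ℝ) - j := by
          have := key_trace (G j') (G j) hGle (Q * P)
            (fun v => by simpa [Module.End.mul_apply] using (hQmem (P v)).1)
            (fun v hv => by
              obtain ⟨g, hg, h, hh, hgh⟩ := Submodule.mem_sup.mp (hPmem v).2
              have hPv : P v = v - (g + h) := by rw [hgh]; abel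
              have hQg : Q g = g := hQ1 g (hGle hg)
              have hQh : Q h = 0 :=
                hQ0 h (Submodule.mem_sup_left (hH.mono' hkk hk'.le hh))
              have : (Q * P) v = v - g := by
                rw [Module.End.mul_apply, hPv, map_sub, map_add, hQ1 v hv, hQg, hQh, add_zero]
              rw [this]
              simpa using neg_mem hg)
            (fun v hv => by
              have : P v = 0 := hP0 v (Submodule.mem_sup_left hv)
              simp [Module.End.mul_apply, this])
          rw [this, hfrG, hG.2 j hj.le]
        have hmin : min ((i : ℝ) - i') ((j' : ℝ) - j) = (j' : ℝ) - j := by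
          apply min_eq_right
          have : i' + j' ≤ i + j := by omega
          have := (Nat.cast_le (α := ℝ)).mpr this
          push_cast at this
          linarith
        have hmax : max 0 (min ((i : ℝ) - i') ((j' : ℝ) - j)) = (j' : ℝ) - j := by
          rw [hmin]
          apply max_eq_right
          have : (j : ℝ) ≤ j' := Nat.cast_le.mpr hjj.le
          linarith
        rw [LinearMap.trace_mul_comm, hT, hmax]
      · -- main case 2 : trace (P*Q) = i - i'
        have hFle : F i' ≤ F i := hF.mono' hii.le hi.le
        have hT : LinearMap.trace ℝ V (P * Q) = (i : ℝ) - i' := by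
          have := key_trace (F i) (F i') hFle (P * Q)
            (fun v => by simpa [Module.End.mul_apply] using (hPmem (Q v)).1)
            (fun v hv => by
              obtain ⟨h, hh, f, hf, hhf⟩ := Submodule.mem_sup.mp (hQmem v).2
              have hQv : Q v = v - (h + f) := by rw [hhf]; abel
              have hPh : P h = 0 :=
                hP0 h (Submodule.mem_sup_right (hH.mono' hkk.le hk.le hh))
              have hPf : P f = f := hP1 f (hFle hf)
              have : (P * Q) v = v - f := by
                rw [Module.End.mul_apply, hQv, map_sub, map_add, hP1 v hv, hPh, hPf, zero_add]
              rw [this]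
              simpa using neg_mem hf)
            (fun v hv => by
              have : Q v = 0 := hQ0 v (Submodule.mem_sup_right hv)
              simp [Module.End.mul_apply, this])
          rw [this, hfrF, hF.2 i' hi'.le]
        have hmin : min ((i : ℝ) - i') ((j' : ℝ) - j) = (i : ℝ) - i' := by
          apply min_eq_left
          have : i + j ≤ i' + j' := by omega
          have := (Nat.cast_le (α := ℝ)).mpr this
          push_cast at this
          linarith
        have hmax : max 0 (min ((i : ℝ) - i') ((j' : ℝ) - j)) = (i : ℝ) - i' := by
          rw [hmin]
          apply max_eq_right
          have : (i' : ℝ) ≤ i := Nat.cast_le.mpr hii.le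
          linarith
        rw [hT, hmax]
end

section
/- Let V be an n-dimensional real vector space and let (F,G,H) be a transverse triple of complete flags in V. Let (f_l), (g_l), (h_l) and (f'_l), (g'_l), (h'_l) be two choices of bases of V adapted to F, G, H respectively, and let ω and ω' be two nonzero alternating n-forms on V. Then for all integers i,j,k ≥ 1 with i+j+k = n, the triple ratio T_{i,j,k}(F,G,H) computed using (f_l), (g_l), (h_l) and ω equals the triple ratio computed using (f'_l), (g'_l), (h'_l) and ω'; that is, the triple ratio depends only on the flags F, G, H. -/
/-- `f` (whose values `f 0, …, f (n-1)` matter) is a basis adapted to the flag `F`: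
`F l` is the span of `f 0, …, f (l-1)` for all `0 ≤ l ≤ n`. -/
def Adapted (n : ℕ) {V : Type*} [AddCommGroup V] [Module ℝ V]
    (F : ℕ → Submodule ℝ V) (f : ℕ → V) : Prop :=
  ∀ l, l ≤ n → F l = Submodule.span ℝ (f '' Set.Iio l)

/-- `F^(a) ∧ G^(b) ∧ H^(c) := ω (f 0, …, f (a-1), g 0, …, g (b-1), h 0, …, h (c-1))`,
for `a + b + c = n`. -/
noncomputable def wedge (n : ℕ) {V : Type*} [AddCommGroup V] [Module ℝ V]
    (ω : AlternatingMap ℝ V ℝ (Fin n)) (f g h : ℕ → V) (a b c : ℕ) : ℝ :=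
  ω fun l : Fin n =>
    if (l : ℕ) < a then f (l : ℕ)
    else if (l : ℕ) < a + b then g ((l : ℕ) - a)
    else h ((l : ℕ) - a - b)

/-- The triple ratio `T_{i,j,k}(F,G,H)` computed with adapted bases `f, g, h` of the
flags `F, G, H` and the nonzero alternating `n`-form `ω`. -/
noncomputable def tripleRatio (n : ℕ) {V : Type*} [AddCommGroup V] [Module ℝ V]
    (ω : AlternatingMap ℝ V ℝ (Fin n)) (f g h : ℕ → V) (i j k : ℕ) : ℝ :=
  (wedge n ω f g h (i + 1) j (k - 1) / wedge n ω f g h (i + 1) (j - 1) k) *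
  (wedge n ω f g h (i - 1) (j + 1) k / wedge n ω f g h i (j + 1) (k - 1)) *
  (wedge n ω f g h i (j - 1) (k + 1) / wedge n ω f g h (i - 1) j (k + 1))


private lemma span_Iio_succ {V : Type*} [AddCommGroup V] [Module ℝ V] (u : ℕ → V) (m : ℕ) :
    Submodule.span ℝ (u '' Set.Iio (m + 1)) =
      (ℝ ∙ u m) ⊔ Submodule.span ℝ (u '' Set.Iio m) := by
  rw [show Set.Iio (m + 1) = insert m (Set.Iio m) by
        ext x; simp only [Set.mem_Iio, Set.mem_insert_iff]; omega,
      Set.image_insert_eq, Submodule.span_insert]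

private lemma frontBlock (n : ℕ) {V : Type*} [AddCommGroup V] [Module ℝ V]
    (f f' : ℕ → V)
    (hspan : ∀ m, m ≤ n → Submodule.span ℝ (f '' Set.Iio m) = Submodule.span ℝ (f' '' Set.Iio m))
    (hrank : ∀ m, m ≤ n → Module.finrank ℝ (Submodule.span ℝ (f '' Set.Iio m)) = m) :
    ∀ a, a ≤ n → ∃ d : ℝ, d ≠ 0 ∧
      ∀ (ω : AlternatingMap ℝ V ℝ (Fin n)) (v : Fin n → V),
        (ω fun l : Fin n => if (l : ℕ) < a then f' (l : ℕ) else v l) =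
          d * ω fun l : Fin n => if (l : ℕ) < a then f (l : ℕ) else v l := by
  intro a
  induction a with
  | zero => exact fun _ => ⟨1, one_ne_zero, fun ω v => by simp⟩
  | succ a ih =>
    intro han
    obtain ⟨d, hd, hprop⟩ := ih (by omega)
    -- decompose f' a = c • f a + u with u in the span of the previous f's
    have hmem : f' a ∈ (ℝ ∙ f a) ⊔ Submodule.span ℝ (f '' Set.Iio a) := by
      rw [← span_Iio_succ, hspan (a + 1) han]
      exact Submodule.subset_span ⟨a, by simp, rfl⟩
    obtain ⟨w, hw, u, hu, hwu⟩ := Submodule.mem_sup.mp hmem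
    obtain ⟨c, rfl⟩ := Submodule.mem_span_singleton.mp hw
    have hc : c ≠ 0 := by
      intro hc0
      subst hc0
      rw [zero_smul, zero_add] at hwu
      have h1 : Submodule.span ℝ (f' '' Set.Iio (a + 1)) = Submodule.span ℝ (f' '' Set.Iio a) := by
        refine le_antisymm ?_ (Submodule.span_mono (Set.image_mono fun x hx => Nat.lt_succ_of_lt hx))
        rw [span_Iio_succ]
        refine sup_le ?_ le_rfl
        rw [Submodule.span_singleton_le_iff_mem, ← hwu, ← hspan a (by omega)]
        exact hu
      have h2 := hrank (a + 1) han
      rw [hspan (a + 1) han, h1, ← hspan a (by omega), hrank a (by omega)] at h2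
      omega
    refine ⟨c * d, mul_ne_zero hc hd, fun ω v => ?_⟩
    set ia : Fin n := ⟨a, by omega⟩ with hia
    have keyfun : ∀ u : ℕ → V,
        (fun l : Fin n => if (l : ℕ) < a + 1 then u (l : ℕ) else v l) =
          Function.update (fun l : Fin n => if (l : ℕ) < a then u (l : ℕ) else v l) ia (u a) := by
      intro u
      funext l
      by_cases hl : l = ia
      · subst hl; simp [hia]
      · rw [Function.update_of_ne hl]
        have hne : (l : ℕ) ≠ a := fun hh => hl (Fin.ext hh)
        by_cases h2 : (l : ℕ) < a
        · simp [h2, Nat.lt_succ_of_lt h2]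
        · have h3 : ¬(l : ℕ) < a + 1 := by omega
          simp [h2, h3]
    have e1 : Function.update (fun l : Fin n => if (l : ℕ) < a then f' (l : ℕ) else v l) ia (f a)
        = fun l : Fin n => if (l : ℕ) < a then f' (l : ℕ) else (Function.update v ia (f a)) l := by
      funext l
      by_cases hl : l = ia
      · subst hl; simp [hia]
      · rw [Function.update_of_ne hl, Function.update_of_ne hl]
    have e2 : (fun l : Fin n => if (l : ℕ) < a then f (l : ℕ) else (Function.update v ia (f a)) l)
        = fun l : Fin n => if (l : ℕ) < a + 1 then f (l : ℕ) else v l := by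
      funext l
      by_cases hl : l = ia
      · subst hl; simp [hia]
      · rw [Function.update_of_ne hl]
        have hne : (l : ℕ) ≠ a := fun hh => hl (Fin.ext hh)
        by_cases h2 : (l : ℕ) < a
        · simp [h2, Nat.lt_succ_of_lt h2]
        · have h3 : ¬(l : ℕ) < a + 1 := by omega
          simp [h2, h3]
    have hzero : ω (Function.update
        (fun l : Fin n => if (l : ℕ) < a then f' (l : ℕ) else v l) ia u) = 0 := by
      apply AlternatingMap.map_linearDependent
      intro hli
      have := hli.notMem_span_image (s := ({ia}ᶜ : Set (Fin n))) (x := ia) (by simp)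
      apply this
      rw [Function.update_self]
      have hsub : f' '' Set.Iio a ⊆
          (Function.update (fun l : Fin n => if (l : ℕ) < a then f' (l : ℕ) else v l) ia u) ''
            ({ia}ᶜ : Set (Fin n)) := by
        rintro x ⟨m, hm, rfl⟩
        have hm' : m < a := hm
        have hmn : m < n := by omega
        have hne : (⟨m, hmn⟩ : Fin n) ≠ ia := by
          simp only [hia, ne_eq, Fin.mk.injEq]; omega
        refine ⟨⟨m, hmn⟩, hne, ?_⟩
        rw [Function.update_of_ne hne]
        simp [hm']
      have hu' : u ∈ Submodule.span ℝ (f' '' Set.Iio a) := by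
        rw [← hspan a (by omega)]; exact hu
      exact Submodule.span_mono hsub hu'
    rw [keyfun f', ← hwu, AlternatingMap.map_update_add, hzero, add_zero,
      AlternatingMap.map_update_smul, e1, hprop ω (Function.update v ia (f a)), e2]
    rw [smul_eq_mul]
    ring
open Fin.NatCast in
private lemma wedge_rot {V : Type*} [AddCommGroup V] [Module ℝ V]
    (n a b c : ℕ) (ha : a < n) (habc : a + b + c = n) :
    ∃ s : ℝ, s ≠ 0 ∧ ∀ (ω : AlternatingMap ℝ V ℝ (Fin n)) (f g h : ℕ → V),
      wedge n ω g h f b c a = s * wedge n ω f g h a b c := by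
  haveI : NeZero n := ⟨by omega⟩
  set σ : Equiv.Perm (Fin n) := Equiv.addRight ((a : Fin n)) with hσ
  refine ⟨((Equiv.Perm.sign σ : ℤ) : ℝ), by simp, fun ω f g h => ?_⟩
  have hval : ((a : Fin n) : ℕ) = a := Fin.val_cast_of_lt ha
  have key : (fun l : Fin n =>
        if (l : ℕ) < b then g (l : ℕ)
        else if (l : ℕ) < b + c then h ((l : ℕ) - b)
        else f ((l : ℕ) - b - c))
      = (fun l : Fin n =>
          if (l : ℕ) < a then f (l : ℕ)
          else if (l : ℕ) < a + b then g ((l : ℕ) - a)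
          else h ((l : ℕ) - a - b)) ∘ σ := by
    funext l
    have hlv : (l : ℕ) < n := l.isLt
    have hadd : ((l + (a : Fin n) : Fin n) : ℕ) = ((l : ℕ) + a) % n := by
      rw [Fin.add_def, hval]
    simp only [Function.comp_apply, hσ, Equiv.coe_addRight]
    by_cases hcase : (l : ℕ) < b + c
    · have hmod : ((l + (a : Fin n) : Fin n) : ℕ) = (l : ℕ) + a := by
        rw [hadd, Nat.mod_eq_of_lt (by omega)]
      rw [hmod]
      by_cases h1 : (l : ℕ) < b
      · rw [if_pos h1, if_neg (by omega), if_pos (by omega)]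
        congr 1
        omega
      · rw [if_neg h1, if_pos hcase, if_neg (by omega), if_neg (by omega)]
        congr 1
        omega
    · have hmod : ((l + (a : Fin n) : Fin n) : ℕ) = (l : ℕ) + a - n := by
        rw [hadd, Nat.mod_eq_sub_mod (by omega), Nat.mod_eq_of_lt (by omega)]
      rw [hmod, if_neg (by omega), if_neg (by omega), if_pos (by omega)]
      congr 1
      omega
  unfold wedge
  rw [key, AlternatingMap.map_perm]
  rw [Units.smul_def, zsmul_eq_mul]

private lemma exists_dfun (n : ℕ) {V : Type*} [AddCommGroup V] [Module ℝ V]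
    (F : ℕ → Submodule ℝ V) (hF : IsFlag n F) (f f' : ℕ → V)
    (hf : Adapted n F f) (hf' : Adapted n F f') :
    ∃ d : ℕ → ℝ, ∀ a, a ≤ n → d a ≠ 0 ∧
      ∀ (ω : AlternatingMap ℝ V ℝ (Fin n)) (v : Fin n → V),
        (ω fun l : Fin n => if (l : ℕ) < a then f' (l : ℕ) else v l) =
          (d a) * ω fun l : Fin n => if (l : ℕ) < a then f (l : ℕ) else v l := by
  have h := frontBlock n f f'
    (fun m hm => by rw [← hf m hm, ← hf' m hm])
    (fun m hm => by rw [← hf m hm]; exact hF.2 m hm)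
  choose d hd1 hd2 using h
  refine ⟨fun a => if ha : a ≤ n then d a ha else 1, fun a ha => ?_⟩
  simp only [dif_pos ha]
  exact ⟨hd1 a ha, hd2 a ha⟩

private lemma wedge_change (n : ℕ) {V : Type*} [AddCommGroup V] [Module ℝ V]
    (ω : AlternatingMap ℝ V ℝ (Fin n)) (f g h f' g' h' : ℕ → V)
    (dF dG dH : ℕ → ℝ)
    (hdF : ∀ a, a ≤ n → dF a ≠ 0 ∧
      ∀ (ω : AlternatingMap ℝ V ℝ (Fin n)) (v : Fin n → V),
        (ω fun l : Fin n => if (l : ℕ) < a then f' (l : ℕ) else v l) =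
          (dF a) * ω fun l : Fin n => if (l : ℕ) < a then f (l : ℕ) else v l)
    (hdG : ∀ a, a ≤ n → dG a ≠ 0 ∧
      ∀ (ω : AlternatingMap ℝ V ℝ (Fin n)) (v : Fin n → V),
        (ω fun l : Fin n => if (l : ℕ) < a then g' (l : ℕ) else v l) =
          (dG a) * ω fun l : Fin n => if (l : ℕ) < a then g (l : ℕ) else v l)
    (hdH : ∀ a, a ≤ n → dH a ≠ 0 ∧
      ∀ (ω : AlternatingMap ℝ V ℝ (Fin n)) (v : Fin n → V),
        (ω fun l : Fin n => if (l : ℕ) < a then h' (l : ℕ) else v l) =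
          (dH a) * ω fun l : Fin n => if (l : ℕ) < a then h (l : ℕ) else v l)
    (a b c : ℕ) (ha : a < n) (hb : b < n) (hc : c < n) (habc : a + b + c = n) :
    wedge n ω f' g' h' a b c = (dF a * (dG b * dH c)) * wedge n ω f g h a b c := by
  obtain ⟨s1, hs1, hrot1⟩ := wedge_rot (V := V) n a b c ha habc
  obtain ⟨s2, hs2, hrot2⟩ := wedge_rot (V := V) n b c a hb (by omega)
  have E2 : wedge n ω f' g' h' a b c = dF a * wedge n ω f g' h' a b c :=
    (hdF a (by omega)).2 ω
      (fun l : Fin n => if (l : ℕ) < a + b then g' ((l : ℕ) - a) else h' ((l : ℕ) - a - b))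
  have h3 : wedge n ω g' h' f b c a = dG b * wedge n ω g h' f b c a :=
    (hdG b (by omega)).2 ω
      (fun l : Fin n => if (l : ℕ) < b + c then h' ((l : ℕ) - b) else f ((l : ℕ) - b - c))
  have E3 : wedge n ω f g' h' a b c = dG b * wedge n ω f g h' a b c := by
    apply mul_left_cancel₀ hs1
    rw [← hrot1 ω f g' h', h3, hrot1 ω f g h']
    ring
  have h4 : wedge n ω h' f g c a b = dH c * wedge n ω h f g c a b :=
    (hdH c (by omega)).2 ω
      (fun l : Fin n => if (l : ℕ) < c + a then f ((l : ℕ) - c) else g ((l : ℕ) - c - a))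
  have h7 : wedge n ω g h' f b c a = dH c * wedge n ω g h f b c a := by
    apply mul_left_cancel₀ hs2
    rw [← hrot2 ω g h' f, h4, hrot2 ω g h f]
    ring
  have E4 : wedge n ω f g h' a b c = dH c * wedge n ω f g h a b c := by
    apply mul_left_cancel₀ hs1
    rw [← hrot1 ω f g h', h7, hrot1 ω f g h]
    ring
  rw [E2, E3, E4]
  ring

theorem statement12 (n : ℕ) (V : Type*) [AddCommGroup V] [Module ℝ V] [FiniteDimensional ℝ V]
    (hV : Module.finrank ℝ V = n)
    (F G H : ℕ → Submodule ℝ V) (hF : IsFlag n F) (hG : IsFlag n G) (hH : IsFlag n H)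
    (hFGH : TransverseTriple n F G H)
    (ω ω' : AlternatingMap ℝ V ℝ (Fin n)) (hω : ω ≠ 0) (hω' : ω' ≠ 0)
    (f g h f' g' h' : ℕ → V)
    (hf : Adapted n F f) (hg : Adapted n G g) (hh : Adapted n H h)
    (hf' : Adapted n F f') (hg' : Adapted n G g') (hh' : Adapted n H h') :
    ∀ i j k : ℕ, 1 ≤ i → 1 ≤ j → 1 ≤ k → i + j + k = n →
      tripleRatio n ω f g h i j k = tripleRatio n ω' f' g' h' i j k := by
  intro i j k hi hj hk hijk
  -- express ω' as a nonzero multiple of ω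
  let e : Module.Basis (Fin n) ℝ V := Module.finBasisOfFinrankEq ℝ V hV
  have hωe : ω e ≠ 0 := by
    intro h0
    exact hω (by rw [ω.eq_smul_basis_det e, h0, zero_smul])
  set c0 : ℝ := ω' e / ω e with hc0def
  have hc0 : c0 ≠ 0 := by
    intro h0
    apply hω'
    rcases div_eq_zero_iff.mp h0 with h0 | h0
    · rw [ω'.eq_smul_basis_det e, h0, zero_smul]
    · exact absurd h0 hωe
  have hω'ω : ω' = c0 • ω := by
    rw [ω'.eq_smul_basis_det e]
    conv_rhs => rw [ω.eq_smul_basis_det e]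
    rw [smul_smul, hc0def, div_mul_cancel₀ _ hωe]
  obtain ⟨dF, hdF⟩ := exists_dfun n F hF f f' hf hf'
  obtain ⟨dG, hdG⟩ := exists_dfun n G hG g g' hg hg'
  obtain ⟨dH, hdH⟩ := exists_dfun n H hH h h' hh hh'
  have key : ∀ a b c : ℕ, a < n → b < n → c < n → a + b + c = n →
      wedge n ω' f' g' h' a b c =
        (c0 * (dF a * (dG b * dH c))) * wedge n ω f g h a b c := by
    intro a b c ha hb hc habc
    have h0 : wedge n ω' f' g' h' a b c = c0 * wedge n ω f' g' h' a b c := by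
      unfold wedge
      rw [hω'ω, AlternatingMap.smul_apply, smul_eq_mul]
    rw [h0, wedge_change n ω f g h f' g' h' dF dG dH hdF hdG hdH a b c ha hb hc habc]
    ring
  have hF1 : dF (i + 1) ≠ 0 := (hdF (i + 1) (by omega)).1
  have hF2 : dF (i - 1) ≠ 0 := (hdF (i - 1) (by omega)).1
  have hF3 : dF i ≠ 0 := (hdF i (by omega)).1
  have hG1 : dG j ≠ 0 := (hdG j (by omega)).1
  have hG2 : dG (j - 1) ≠ 0 := (hdG (j - 1) (by omega)).1
  have hG3 : dG (j + 1) ≠ 0 := (hdG (j + 1) (by omega)).1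
  have hH1 : dH (k - 1) ≠ 0 := (hdH (k - 1) (by omega)).1
  have hH2 : dH k ≠ 0 := (hdH k (by omega)).1
  have hH3 : dH (k + 1) ≠ 0 := (hdH (k + 1) (by omega)).1
  unfold tripleRatio
  rw [key (i + 1) j (k - 1) (by omega) (by omega) (by omega) (by omega),
    key (i + 1) (j - 1) k (by omega) (by omega) (by omega) (by omega),
    key (i - 1) (j + 1) k (by omega) (by omega) (by omega) (by omega),
    key i (j + 1) (k - 1) (by omega) (by omega) (by omega) (by omega),
    key i (j - 1) (k + 1) (by omega) (by omega) (by omega) (by omega),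
    key (i - 1) j (k + 1) (by omega) (by omega) (by omega) (by omega),
    mul_div_mul_comm, mul_div_mul_comm, mul_div_mul_comm]
  have hK : (c0 * (dF (i + 1) * (dG j * dH (k - 1)))) / (c0 * (dF (i + 1) * (dG (j - 1) * dH k))) *
      ((c0 * (dF (i - 1) * (dG (j + 1) * dH k))) / (c0 * (dF i * (dG (j + 1) * dH (k - 1))))) *
      ((c0 * (dF i * (dG (j - 1) * dH (k + 1)))) / (c0 * (dF (i - 1) * (dG j * dH (k + 1))))) = 1 := by
    field_simp
  linear_combination (-(wedge n ω f g h (i + 1) j (k - 1) / wedge n ω f g h (i + 1) (j - 1) k *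
    (wedge n ω f g h (i - 1) (j + 1) k / wedge n ω f g h i (j + 1) (k - 1)) *
    (wedge n ω f g h i (j - 1) (k + 1) / wedge n ω f g h (i - 1) j (k + 1)))) * hK
end

section
/- Let V be an n-dimensional real vector space (n ≥ 2), and let E,F,G,H be complete flags in V such that (E,F,H) and (E,G,H) are transverse triples. Then (H,G,E) and (H,F,E) are also transverse triples, and for every integer 1 ≤ i ≤ n−1: C_i(E,F,G,H) = C_{n−i}(H,G,F,E) and C_i(E,F,G,H) · C_i(E,G,F,H) = 1. -/
/-- The cross ratio `C_i(E,F,G,H)` computed with adapted bases `e, f, g, h` of the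
flags `E, F, G, H` and the nonzero alternating `n`-form `ω`. -/
noncomputable def crossRatio (n : ℕ) {V : Type*} [AddCommGroup V] [Module ℝ V]
    (ω : AlternatingMap ℝ V ℝ (Fin n)) (e f g h : ℕ → V) (i : ℕ) : ℝ :=
  (wedge n ω e h g i (n - i - 1) 1 / wedge n ω e h f i (n - i - 1) 1) *
  (wedge n ω e h f (i - 1) (n - i) 1 / wedge n ω e h g (i - 1) (n - i) 1)


section Aux

variable {V : Type*} [AddCommGroup V] [Module ℝ V]

/-- Block swap permutation of `Fin n`: exchanges the first block of length `b`
with the following block of length `a`, fixing indices `≥ a + b`. -/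
def blockSwap (n a b : ℕ) (hab : a + b ≤ n) : Equiv.Perm (Fin n) where
  toFun l := if h1 : (l : ℕ) < b then ⟨(l : ℕ) + a, by omega⟩
    else if h2 : (l : ℕ) < a + b then ⟨(l : ℕ) - b, by omega⟩ else l
  invFun l := if h1 : (l : ℕ) < a then ⟨(l : ℕ) + b, by omega⟩
    else if h2 : (l : ℕ) < a + b then ⟨(l : ℕ) - a, by omega⟩ else l
  left_inv l := by
    dsimp only
    by_cases h1 : (l : ℕ) < b
    · rw [dif_pos h1, dif_neg (by simp only [Fin.val_mk]; omega),
        dif_pos (by simp only [Fin.val_mk]; omega)]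
      apply Fin.ext; simp only [Fin.val_mk]; omega
    · by_cases h2 : (l : ℕ) < a + b
      · rw [dif_neg h1, dif_pos h2, dif_pos (by simp only [Fin.val_mk]; omega)]
        apply Fin.ext; simp only [Fin.val_mk]; omega
      · rw [dif_neg h1, dif_neg h2, dif_neg (by omega), dif_neg (by omega)]
  right_inv l := by
    dsimp only
    by_cases h1 : (l : ℕ) < a
    · rw [dif_pos h1, dif_neg (by simp only [Fin.val_mk]; omega),
        dif_pos (by simp only [Fin.val_mk]; omega)]
      apply Fin.ext; simp only [Fin.val_mk]; omega
    · by_cases h2 : (l : ℕ) < a + b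
      · rw [dif_neg h1, dif_pos h2, dif_pos (by simp only [Fin.val_mk]; omega)]
        apply Fin.ext; simp only [Fin.val_mk]; omega
      · rw [dif_neg h1, dif_neg h2, dif_neg (by omega), dif_neg (by omega)]

theorem wedge_swap (n a b c : ℕ) (habc : a + b + c = n)
    (ω : AlternatingMap ℝ V ℝ (Fin n)) (e h x : ℕ → V) :
    wedge n ω h e x b a c
      = Equiv.Perm.sign (blockSwap n a b (by omega)) • wedge n ω e h x a b c := by
  unfold wedge
  rw [← AlternatingMap.map_perm]
  congr 1
  funext l
  simp only [Function.comp_apply, blockSwap, Equiv.coe_fn_mk]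
  by_cases h1 : (l : ℕ) < b
  · rw [if_pos h1, dif_pos h1, if_neg (by simp only [Fin.val_mk]; omega),
      if_pos (by simp only [Fin.val_mk]; omega)]
    congr 1
    simp only [Fin.val_mk]
    try omega
  · by_cases h2 : (l : ℕ) < b + a
    · rw [if_neg h1, if_pos h2, dif_neg h1, dif_pos (by omega),
        if_pos (by simp only [Fin.val_mk]; omega)]
    · rw [if_neg h1, if_neg h2, dif_neg h1, dif_neg (by omega),
        if_neg (by omega), if_neg (by omega)]
      congr 1
      omega

theorem smul_div_smul_units (s : ℤˣ) (X Y : ℝ) : (s • X) / (s • Y) = X / Y := by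
  rcases Int.units_eq_one_or s with rfl | rfl
  · simp
  · simp only [Units.smul_def, Units.val_neg, Units.val_one]
    rw [neg_smul, one_smul, neg_smul, one_smul, neg_div_neg_eq]

theorem wedge_div_swap (n a b : ℕ) (hab : a + b + 1 = n)
    (ω : AlternatingMap ℝ V ℝ (Fin n)) (e h x y : ℕ → V) :
    wedge n ω h e x b a 1 / wedge n ω h e y b a 1
      = wedge n ω e h x a b 1 / wedge n ω e h y a b 1 := by
  rw [wedge_swap n a b 1 hab ω e h x, wedge_swap n a b 1 hab ω e h y,
    smul_div_smul_units]

theorem wedge_ne_zero (n a b : ℕ) (hab : a + b + 1 = n)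
    [FiniteDimensional ℝ V] (hV : Module.finrank ℝ V = n)
    (ω : AlternatingMap ℝ V ℝ (Fin n)) (hω : ω ≠ 0) (e h x : ℕ → V)
    (hspan : Submodule.span ℝ (e '' Set.Iio a) ⊔ Submodule.span ℝ (h '' Set.Iio b)
        ⊔ Submodule.span ℝ (x '' Set.Iio 1) = ⊤) :
    wedge n ω e h x a b 1 ≠ 0 := by
  set u : Fin n → V := fun l : Fin n =>
    if (l : ℕ) < a then e (l : ℕ)
    else if (l : ℕ) < a + b then h ((l : ℕ) - a)
    else x ((l : ℕ) - a - b) with hu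
  have hA : ∀ m : Fin n, (m : ℕ) < a → u m = e (m : ℕ) := by
    intro m hm
    simp [hu, hm]
  have hB : ∀ m : Fin n, ¬ (m : ℕ) < a → (m : ℕ) < a + b → u m = h ((m : ℕ) - a) := by
    intro m hm1 hm2
    simp [hu, hm1, hm2]
  have hC : ∀ m : Fin n, ¬ (m : ℕ) < a → ¬ (m : ℕ) < a + b →
      u m = x ((m : ℕ) - a - b) := by
    intro m hm1 hm2
    simp [hu, hm1, hm2]
  have hle : ⊤ ≤ Submodule.span ℝ (Set.range u) := by
    rw [← hspan]
    have h1 : e '' Set.Iio a ⊆ Set.range u := by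
      rintro - ⟨j, hj, rfl⟩
      simp only [Set.mem_Iio] at hj
      refine ⟨⟨j, by omega⟩, ?_⟩
      rw [hA ⟨j, by omega⟩ hj]
    have h2 : h '' Set.Iio b ⊆ Set.range u := by
      rintro - ⟨j, hj, rfl⟩
      simp only [Set.mem_Iio] at hj
      refine ⟨⟨a + j, by omega⟩, ?_⟩
      rw [hB ⟨a + j, by omega⟩ (by show ¬ a + j < a; omega)
        (by show a + j < a + b; omega)]
      show h (a + j - a) = h j
      congr 1
      omega
    have h3 : x '' Set.Iio 1 ⊆ Set.range u := by
      rintro - ⟨j, hj, rfl⟩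
      simp only [Set.mem_Iio] at hj
      have : j = 0 := by omega
      subst this
      refine ⟨⟨a + b, by omega⟩, ?_⟩
      rw [hC ⟨a + b, by omega⟩ (by show ¬ a + b < a; omega)
        (by show ¬ a + b < a + b; omega)]
      show x (a + b - a - b) = x 0
      congr 1
      omega
    refine sup_le (sup_le ?_ ?_) ?_ <;>
      [exact Submodule.span_mono h1; exact Submodule.span_mono h2;
        exact Submodule.span_mono h3]
  have hcard : Fintype.card (Fin n) = Module.finrank ℝ V := by simp [hV]
  set B := basisOfTopLeSpanOfCardEqFinrank u hle hcard with hB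
  have hcoe : ⇑B = u := coe_basisOfTopLeSpanOfCardEqFinrank u hle hcard
  have hωB : ω ⇑B ≠ 0 := by
    intro h0
    apply hω
    have := AlternatingMap.eq_smul_basis_det B ω
    rw [h0, zero_smul] at this
    exact this
  show ω u ≠ 0
  rwa [← hcoe]

end Aux

theorem statement14 (n : ℕ) (hn : 2 ≤ n) (V : Type*) [AddCommGroup V] [Module ℝ V]
    [FiniteDimensional ℝ V] (hV : Module.finrank ℝ V = n)
    (E F G H : ℕ → Submodule ℝ V)
    (hE : IsFlag n E) (hF : IsFlag n F) (hG : IsFlag n G) (hH : IsFlag n H)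
    (hEFH : TransverseTriple n E F H) (hEGH : TransverseTriple n E G H)
    (ω : AlternatingMap ℝ V ℝ (Fin n)) (hω : ω ≠ 0)
    (e f g h : ℕ → V)
    (he : Adapted n E e) (hf : Adapted n F f) (hg : Adapted n G g) (hh : Adapted n H h) :
    TransverseTriple n H G E ∧ TransverseTriple n H F E ∧
    ∀ i : ℕ, 1 ≤ i → i < n →
      crossRatio n ω e f g h i = crossRatio n ω h g f e (n - i) ∧
      crossRatio n ω e f g h i * crossRatio n ω e g f h i = 1 := by
  have hsup3 : ∀ X Y Z : Submodule ℝ V, X ⊔ Y ⊔ Z = Z ⊔ Y ⊔ X := by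
    intro X Y Z
    rw [sup_comm _ Z, sup_comm X Y, ← sup_assoc]
  have hHGE : TransverseTriple n H G E := by
    intro a b c habc
    rw [hsup3]
    exact hEGH c b a (by omega)
  have hHFE : TransverseTriple n H F E := by
    intro a b c habc
    rw [hsup3]
    exact hEFH c b a (by omega)
  refine ⟨hHGE, hHFE, ?_⟩
  intro i hi1 hi2
  -- nonvanishing of the four wedges
  have key : ∀ (a b : ℕ) (x : ℕ → V) (X : ℕ → Submodule ℝ V), a + b + 1 = n →
      Adapted n X x → (E a ⊔ X 1 ⊔ H b = ⊤) → wedge n ω e h x a b 1 ≠ 0 := by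
    intro a b x X hab hx htop
    apply wedge_ne_zero n a b hab hV ω hω
    rw [← he a (by omega), ← hh b (by omega), ← hx 1 (by omega), ← htop]
    rw [sup_assoc, sup_comm (H b) (X 1), ← sup_assoc]
  have hA : wedge n ω e h g i (n - i - 1) 1 ≠ 0 :=
    key i (n - i - 1) g G (by omega) hg (hEGH i 1 (n - i - 1) (by omega))
  have hB : wedge n ω e h f i (n - i - 1) 1 ≠ 0 :=
    key i (n - i - 1) f F (by omega) hf (hEFH i 1 (n - i - 1) (by omega))
  have hC : wedge n ω e h f (i - 1) (n - i) 1 ≠ 0 :=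
    key (i - 1) (n - i) f F (by omega) hf (hEFH (i - 1) 1 (n - i) (by omega))
  have hD : wedge n ω e h g (i - 1) (n - i) 1 ≠ 0 :=
    key (i - 1) (n - i) g G (by omega) hg (hEGH (i - 1) 1 (n - i) (by omega))
  constructor
  · simp only [crossRatio]
    rw [show n - (n - i) - 1 = i - 1 from by omega, show n - (n - i) = i from by omega]
    rw [wedge_div_swap n (i - 1) (n - i) (by omega) ω e h f g,
      wedge_div_swap n i (n - i - 1) (by omega) ω e h g f]
    ring
  · simp only [crossRatio]
    field_simp
end
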